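/- Let n ≥ 1, let A ∈ GL_n(ℂ), and let Q(X) = X^p − c_{p−1}X^{p−1} − ⋯ − c_1X − c_0 ∈ ℂ[X] be a monic polynomial of degree p ≥ 1 with Q(A) = 0 and c_0 ≠ 0. Let C_Q be the companion matrix of Q and c := (c_{p−1}, c_{p−2}, …, c_0) ∈ ℂ^p. Then C_Q is invertible, and for every integer k ∈ ℤ one has A^k = Σ_{i=1}^p ((C_Q)^k·c)_i · A^{−i}, where (C_Q)^k·c denotes the matrix–vector product of the k-th (integer) power of C_Q with c. -/

import Mathlib

/-- The companion matrix of the monic polynomial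
`X^p − c_{p−1}X^{p−1} − ⋯ − c_1 X − c_0` (where `c i` is the coefficient `c_i`):
its first column is `(c_{p−1}, …, c_0)ᵗ`, its `(i, i+1)` entries are `1`,
and all other entries are `0`. -/
def companionOf (p : ℕ) (c : Fin p → ℂ) : Matrix (Fin p) (Fin p) ℂ :=
  Matrix.of fun i j : Fin p =>
    if (j : ℕ) = (i : ℕ) + 1 then 1 else if (j : ℕ) = 0 then c i.rev else 0


lemma sum_ite_val {p : ℕ} (m : ℕ) (f : Fin p → ℂ) :
    ∑ j : Fin p, (if (j : ℕ) = m then f j else 0) = if h : m < p then f ⟨m, h⟩ else 0 := by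
  split
  · next h =>
    rw [Finset.sum_eq_single (⟨m, h⟩ : Fin p)]
    · simp
    · intro j _ hj; rw [if_neg]; simp [Fin.ext_iff] at hj; exact hj
    · simp
  · next h =>
    apply Finset.sum_eq_zero; intro j _; rw [if_neg]; omega

lemma companion_mulVec {p : ℕ} (hp : 1 ≤ p) (c : Fin p → ℂ) (v : Fin p → ℂ) (i : Fin p) :
    (companionOf p c).mulVec v i =
      (if h : (i : ℕ) + 1 < p then v ⟨(i : ℕ) + 1, h⟩ else 0) + c i.rev * v ⟨0, hp⟩ := by
  have : ∀ j : Fin p, companionOf p c i j * v j =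
      (if (j : ℕ) = (i : ℕ) + 1 then v j else 0) + (if (j : ℕ) = 0 then c i.rev * v j else 0) := by
    intro j
    simp only [companionOf, Matrix.of_apply]
    split
    · next h => rw [if_neg (by omega), one_mul, add_zero]
    · split
      · simp
      · simp
  simp only [Matrix.mulVec, dotProduct, this, Finset.sum_add_distrib, sum_ite_val]
  congr 1
  split
  · rfl
  · omega

lemma base_one {n : ℕ} {A : Matrix (Fin n) (Fin n) ℂ} (hA : IsUnit A) {p : ℕ} (hp : 1 ≤ p)
    {c : Fin p → ℂ}
    (hQ : Polynomial.aeval A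
      (Polynomial.X ^ p - ∑ i : Fin p, Polynomial.C (c i) * Polynomial.X ^ (i : ℕ)) = 0) :
    (1 : Matrix (Fin n) (Fin n) ℂ) = ∑ i : Fin p, c i.rev • A ^ (-1 - (i : ℤ)) := by
  have hAd : IsUnit A.det := (Matrix.isUnit_iff_isUnit_det A).mp hA
  have hpow : A ^ p = ∑ i : Fin p, c i • A ^ (i : ℕ) := by
    simp only [map_sub, map_sum, map_mul, map_pow, Polynomial.aeval_X, Polynomial.aeval_C,
      sub_eq_zero] at hQ
    simpa [Algebra.smul_def] using hQ
  have key : (1 : Matrix (Fin n) (Fin n) ℂ) = ∑ i : Fin p, c i • A ^ ((i : ℤ) - p) := by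
    calc (1 : Matrix (Fin n) (Fin n) ℂ) = A ^ ((-(p:ℤ)) + p) := by
          rw [neg_add_cancel, zpow_zero]
      _ = A ^ (-(p:ℤ)) * A ^ (p : ℤ) := Matrix.zpow_add hAd _ _
      _ = A ^ (-(p:ℤ)) * ∑ i : Fin p, c i • A ^ (i : ℕ) := by rw [zpow_natCast, hpow]
      _ = ∑ i : Fin p, c i • A ^ ((i : ℤ) - p) := by
          rw [Finset.mul_sum]
          refine Finset.sum_congr rfl fun i _ => ?_
          rw [Matrix.mul_smul, ← zpow_natCast A (i : ℕ), ← Matrix.zpow_add hAd]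
          ring_nf
  rw [key]
  rw [← Fintype.sum_bijective Fin.rev Fin.rev_involutive.bijective _ _ (fun i => rfl)]
  refine Finset.sum_congr rfl fun i _ => ?_
  congr 2
  have h1 := Fin.val_rev i
  have h2 := i.isLt
  omega

lemma step_mul {n : ℕ} {A : Matrix (Fin n) (Fin n) ℂ} (hA : IsUnit A) {p : ℕ} (hp : 1 ≤ p)
    {c : Fin p → ℂ}
    (hQ : Polynomial.aeval A
      (Polynomial.X ^ p - ∑ i : Fin p, Polynomial.C (c i) * Polynomial.X ^ (i : ℕ)) = 0)
    (v : Fin p → ℂ) :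
    ∑ i : Fin p, (companionOf p c).mulVec v i • A ^ (-1 - (i : ℤ)) =
      A * ∑ i : Fin p, v i • A ^ (-1 - (i : ℤ)) := by
  have hAd : IsUnit A.det := (Matrix.isUnit_iff_isUnit_det A).mp hA
  have hrhs : A * ∑ i : Fin p, v i • A ^ (-1 - (i : ℤ)) =
      ∑ i : Fin p, v i • A ^ (-(i : ℤ)) := by
    rw [Finset.mul_sum]
    refine Finset.sum_congr rfl fun i _ => ?_
    rw [Matrix.mul_smul, ← Matrix.zpow_one_add hAd,
      show (1 : ℤ) + (-1 - (i : ℤ)) = -(i : ℤ) by ring]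
  rw [hrhs]
  have hlhs : ∀ i : Fin p, (companionOf p c).mulVec v i • A ^ (-1 - (i : ℤ)) =
      (if h : (i : ℕ) + 1 < p then v ⟨(i : ℕ) + 1, h⟩ else 0) • A ^ (-1 - (i : ℤ))
        + v ⟨0, hp⟩ • (c i.rev • A ^ (-1 - (i : ℤ))) := by
    intro i
    rw [companion_mulVec hp, add_smul, mul_comm, mul_smul]
  rw [Finset.sum_congr rfl fun i _ => hlhs i, Finset.sum_add_distrib, ← Finset.smul_sum,
    ← base_one hA hp hQ]
  obtain ⟨m, rfl⟩ : ∃ m, p = m + 1 := ⟨p - 1, by omega⟩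
  rw [Fin.sum_univ_castSucc
    (f := fun x : Fin (m+1) => (if h : (x:ℕ)+1 < m+1 then v ⟨(x:ℕ)+1, h⟩ else 0) • A ^ (-1-(x:ℤ))),
    Fin.sum_univ_succ (f := fun i : Fin (m+1) => v i • A ^ (-(i:ℤ)))]
  rw [dif_neg (by simp), zero_smul, add_zero]
  have h0 : (⟨0, hp⟩ : Fin (m+1)) = 0 := rfl
  rw [h0]
  simp only [Fin.val_zero, Nat.cast_zero, neg_zero, zpow_zero]
  rw [add_comm]
  congr 1
  refine Finset.sum_congr rfl fun i _ => ?_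
  have h1 : ((i.castSucc : ℕ) : ℤ) = (i : ℤ) := by simp
  have h2 : (i.castSucc : ℕ) + 1 < m + 1 := by simp [i.isLt]
  rw [dif_pos h2]
  have hv : (⟨(i.castSucc : ℕ) + 1, h2⟩ : Fin (m + 1)) = i.succ := by
    simp [Fin.ext_iff]
  have he : (-1 - ((i.castSucc : ℕ) : ℤ)) = -((i.succ : ℕ) : ℤ) := by
    rw [h1, Fin.val_succ]; push_cast; ring
  rw [hv, he]

lemma isUnit_companionOf {p : ℕ} (hp : 1 ≤ p) {c : Fin p → ℂ} (hc0 : c ⟨0, hp⟩ ≠ 0) :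
    IsUnit (companionOf p c) := by
  rw [← Matrix.mulVec_injective_iff_isUnit]
  have key : ∀ x : Fin p → ℂ, (companionOf p c).mulVec x = 0 → x = 0 := by
    intro x hx
    have hterm : ∀ i : Fin p,
        (if h : (i : ℕ) + 1 < p then x ⟨(i : ℕ) + 1, h⟩ else 0) + c i.rev * x ⟨0, hp⟩ = 0 := by
      intro i
      have := congrFun hx i
      rwa [companion_mulVec hp] at this
    have hx0 : x ⟨0, hp⟩ = 0 := by
      have h := hterm ⟨p - 1, by omega⟩
      rw [dif_neg (by show ¬(p - 1 + 1 < p); omega)] at h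
      have hrev : (⟨p - 1, by omega⟩ : Fin p).rev = ⟨0, hp⟩ := by
        simp [Fin.ext_iff, Fin.val_rev]; omega
      rw [hrev, zero_add] at h
      exact (mul_eq_zero.mp h).resolve_left hc0
    funext j
    rcases Nat.eq_zero_or_pos (j : ℕ) with hj | hj
    · have : j = ⟨0, hp⟩ := by simp [Fin.ext_iff, hj]
      rw [this, hx0]; rfl
    · have h := hterm ⟨(j : ℕ) - 1, by omega⟩
      have hjlt := j.isLt
      rw [hx0, mul_zero, add_zero, dif_pos (by show (j:ℕ) - 1 + 1 < p; omega)] at h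
      have : (⟨(j : ℕ) - 1 + 1, by omega⟩ : Fin p) = j := by simp [Fin.ext_iff]; omega
      rw [this] at h
      exact h
  intro x y hxy
  have : (companionOf p c).mulVec (x - y) = 0 := by
    rw [Matrix.mulVec_sub, hxy, sub_self]
  have := key _ this
  funext i
  have := congrFun this i
  simpa [sub_eq_zero] using this

/-- if `Q = X^p − c_{p−1}X^{p−1} − ⋯ − c_0` satisfies `Q(A) = 0` and
`c_0 ≠ 0`, with companion matrix `C_Q` and `c = (c_{p−1}, …, c_0)` (the vector
`fun j => c j.rev`), then `C_Q` is invertible and for every `k ∈ ℤ`,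
`A^k = Σ_{i=1}^p ((C_Q)^k c)_i A^{−i}` (zero-based: `i : Fin p` corresponds to `A^{−1−i}`). -/
theorem zpow_eq_sum_companion_zpow_mulVec_of_aeval_eq_zero (n : ℕ) (hn : 1 ≤ n)
    (A : Matrix (Fin n) (Fin n) ℂ) (hA : IsUnit A) (p : ℕ) (hp : 1 ≤ p)
    (c : Fin p → ℂ) (hc0 : c ⟨0, hp⟩ ≠ 0)
    (hQ : Polynomial.aeval A
      (Polynomial.X ^ p - ∑ i : Fin p, Polynomial.C (c i) * Polynomial.X ^ (i : ℕ)) = 0) :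
    IsUnit (companionOf p c) ∧
      ∀ k : ℤ, A ^ k =
        ∑ i : Fin p,
          ((companionOf p c) ^ k).mulVec (fun j : Fin p => c j.rev) i • A ^ (-1 - (i : ℤ)) := by
  have hCu : IsUnit (companionOf p c) := isUnit_companionOf hp hc0
  have hCd : IsUnit (companionOf p c).det := (Matrix.isUnit_iff_isUnit_det _).mp hCu
  have hAd : IsUnit A.det := (Matrix.isUnit_iff_isUnit_det A).mp hA
  refine ⟨hCu, ?_⟩
  set c' : Fin p → ℂ := fun j => c j.rev with hc'
  have hstep : ∀ k : ℤ,
      ∑ i : Fin p, ((companionOf p c) ^ (k + 1)).mulVec c' i • A ^ (-1 - (i : ℤ)) =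
        A * ∑ i : Fin p, ((companionOf p c) ^ k).mulVec c' i • A ^ (-1 - (i : ℤ)) := by
    intro k
    rw [show k + 1 = 1 + k by ring, Matrix.zpow_one_add hCd, ← Matrix.mulVec_mulVec]
    exact step_mul hA hp hQ _
  intro k
  induction k using Int.induction_on with
  | zero =>
      rw [zpow_zero, zpow_zero]
      simpa using base_one hA hp hQ
  | succ k ih =>
      rw [show (k : ℤ) + 1 = 1 + k by ring, Matrix.zpow_one_add hAd,
        show (1 : ℤ) + k = k + 1 by ring, hstep, ← ih]
  | pred k ih =>
      have h1 := hstep (-(k : ℤ) - 1)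
      rw [sub_add_cancel] at h1
      rw [← ih] at h1
      have h2 : A ^ (-(k : ℤ)) = A * A ^ (-(k : ℤ) - 1) := by
        rw [← Matrix.zpow_one_add hAd, show (1 : ℤ) + (-(k : ℤ) - 1) = -(k : ℤ) by ring]
      rw [h2] at h1
      exact hA.mul_left_cancel h1
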